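/- Let H = (V,E) be a finite loopless hypergraph (every hyperedge has at least 2 vertices) with E nonempty, and suppose that the maximum degree satisfies (Δ(H) − 1)² ≤ Δ₂(H) + 1 (equivalently Δ(H) ≤ √(Δ₂(H)+1) + 1). Then q(H) ≤ Δ₂(H) + 1. -/

import Mathlib

open Finset

/-- A proper coloring of the hyperedges `E` with colors in `{1, …, q}`:
hyperedges with the same color are equal or disjoint. -/
def IsProperColoring {V : Type*} [DecidableEq V] (E : Finset (Finset V)) (q : ℕ)
    (c : Finset V → ℕ) : Prop :=
  (∀ e ∈ E, c e ∈ Finset.Icc 1 q) ∧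
  ∀ e ∈ E, ∀ e' ∈ E, c e = c e' → e ∩ e' = ∅ ∨ e = e'

/-- The chromatic index `q(H)`: the least `q` admitting a proper coloring. -/
noncomputable def chromIndex {V : Type*} [DecidableEq V] (E : Finset (Finset V)) : ℕ :=
  sInf {q | ∃ c, IsProperColoring E q c}

/-- Degree of a vertex: the number of hyperedges containing it. -/
def vdeg {V : Type*} [DecidableEq V] (E : Finset (Finset V)) (x : V) : ℕ :=
  (E.filter (fun e => x ∈ e)).card

/-- Degree of a vertex in the 2-section: `Σ_{e ∋ x} (|e| - 1)`. -/
def deg2 {V : Type*} [DecidableEq V] (E : Finset (Finset V)) (x : V) : ℕ :=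
  ∑ e ∈ E.filter (fun e => x ∈ e), (e.card - 1)

/-- Maximum degree `Δ(H)`. -/
def maxDeg {V : Type*} [Fintype V] [DecidableEq V] (E : Finset (Finset V)) : ℕ :=
  Finset.univ.sup (vdeg E)

/-- Maximum degree `Δ₂(H)` of the 2-section. -/
def maxDeg2 {V : Type*} [Fintype V] [DecidableEq V] (E : Finset (Finset V)) : ℕ :=
  Finset.univ.sup (deg2 E)

/-- Degree of a hyperedge: the number of other hyperedges meeting it. -/
def edgeDeg {V : Type*} [DecidableEq V] (E : Finset (Finset V)) (e : Finset V) : ℕ :=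
  ((E.erase e).filter (fun a => (a ∩ e).Nonempty)).card

/-- `H` is linear: distinct hyperedges meet in at most one vertex. -/
def IsLinear {V : Type*} [DecidableEq V] (E : Finset (Finset V)) : Prop :=
  ∀ e ∈ E, ∀ e' ∈ E, e ≠ e' → (e ∩ e').card ≤ 1

namespace Stmt2

open scoped Classical

variable {V : Type*} [DecidableEq V]

/-- The neighbors of `h` inside `S`. -/
noncomputable def NS (S : Finset (Finset V)) (h : Finset V) : Finset (Finset V) :=
  (S.erase h).filter fun f => (f ∩ h).Nonempty

/-- Proper coloring with colors in `{1,…,D}` of the hyperedges of `S`. -/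
def Proper (D : ℕ) (S : Finset (Finset V)) (c : Finset V → ℕ) : Prop :=
  (∀ f ∈ S, c f ∈ Finset.Icc 1 D) ∧
    ∀ f ∈ S, ∀ g ∈ S, c f = c g → f ∩ g = ∅ ∨ f = g

lemma mem_NS {S : Finset (Finset V)} {h f : Finset V} :
    f ∈ NS S h ↔ f ∈ S ∧ f ≠ h ∧ (f ∩ h).Nonempty := by
  simp only [NS, Finset.mem_filter, Finset.mem_erase]
  tauto

lemma inter_empty_of_not_mem_NS {S : Finset (Finset V)} {h f : Finset V}
    (hf : f ∈ S) (hfh : f ≠ h) (hnot : f ∉ NS S h) : f ∩ h = ∅ := by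
  by_contra hne
  exact hnot (mem_NS.mpr ⟨hf, hfh, Finset.nonempty_iff_ne_empty.mpr hne⟩)

lemma exists_fresh {D : ℕ} (B : Finset ℕ) (hB : B.card < D) :
    ∃ δ ∈ Finset.Icc 1 D, δ ∉ B := by
  have h1 : (Finset.Icc 1 D).card = D := by
    rw [Nat.card_Icc]; omega
  have h2 : (Finset.Icc 1 D \ B).Nonempty := by
    rw [← Finset.card_pos]
    have := Finset.le_card_sdiff B (Finset.Icc 1 D)
    omega
  obtain ⟨δ, hδ⟩ := h2
  rw [Finset.mem_sdiff] at hδ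
  exact ⟨δ, hδ.1, hδ.2⟩

/-- Extend a proper coloring of `S.erase h` to `S` when `h` has at most `D-1` neighbors. -/
lemma proper_extend {D : ℕ} {S : Finset (Finset V)} {h : Finset V} (hh : h ∈ S)
    {c : Finset V → ℕ} (hc : Proper D (S.erase h) c) (hN : (NS S h).card < D) :
    ∃ c', Proper D S c' := by
  obtain ⟨δ, hδIcc, hδ⟩ :=
    exists_fresh ((NS S h).image c) (lt_of_le_of_lt Finset.card_image_le hN)
  refine ⟨fun f => if f = h then δ else c f, ?_, ?_⟩
  · intro f hf
    by_cases hfh : f = h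
    · simp [hfh, hδIcc]
    · simpa [hfh] using hc.1 f (Finset.mem_erase.mpr ⟨hfh, hf⟩)
  · intro f hf g hg hcol
    by_cases hfh : f = h <;> by_cases hgh : g = h
    · right; rw [hfh, hgh]
    · -- f = h, g ≠ h : colors δ = c g
      simp only [hfh, if_pos rfl, hgh, if_neg hgh] at hcol
      by_cases hng : (g ∩ h).Nonempty
      · exfalso
        exact hδ (Finset.mem_image.mpr ⟨g, mem_NS.mpr ⟨hg, hgh, hng⟩, hcol.symm⟩)
      · left
        rw [hfh, Finset.inter_comm]
        exact Finset.not_nonempty_iff_eq_empty.mp hng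
    · simp only [hfh, if_neg hfh, hgh, if_pos rfl] at hcol
      by_cases hnf : (f ∩ h).Nonempty
      · exfalso
        exact hδ (Finset.mem_image.mpr ⟨f, mem_NS.mpr ⟨hf, hfh, hnf⟩, hcol⟩)
      · left
        rw [hgh]
        exact Finset.not_nonempty_iff_eq_empty.mp hnf
    · simp only [if_neg hfh, if_neg hgh] at hcol
      exact hc.2 f (Finset.mem_erase.mpr ⟨hfh, hf⟩) g (Finset.mem_erase.mpr ⟨hgh, hg⟩) hcol

/-- Union of proper colorings of parts whose hyperedges do not meet. -/
lemma proper_union {D : ℕ} {S₁ S₂ : Finset (Finset V)} {c₁ c₂ : Finset V → ℕ}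
    (hdisj : ∀ f ∈ S₁, ∀ g ∈ S₂, g ∉ S₁ → f ∩ g = ∅)
    (hc₁ : Proper D S₁ c₁) (hc₂ : Proper D S₂ c₂) :
    ∃ c, Proper D (S₁ ∪ S₂) c := by
  refine ⟨fun f => if f ∈ S₁ then c₁ f else c₂ f, ?_, ?_⟩
  · intro f hf
    by_cases h1 : f ∈ S₁
    · simp only [if_pos h1]; exact hc₁.1 f h1
    · simp only [if_neg h1]
      exact hc₂.1 f ((Finset.mem_union.mp hf).resolve_left h1)
  · intro f hf g hg hcol
    by_cases h1 : f ∈ S₁ <;> by_cases h2 : g ∈ S₁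
    · simp only [if_pos h1, if_pos h2] at hcol
      exact hc₁.2 f h1 g h2 hcol
    · left; exact hdisj f h1 g ((Finset.mem_union.mp hg).resolve_left h2) h2
    · left
      have := hdisj g h2 f ((Finset.mem_union.mp hf).resolve_left h1) h1
      rw [Finset.inter_comm]; exact this
    · simp only [if_neg h1, if_neg h2] at hcol
      exact hc₂.2 f ((Finset.mem_union.mp hf).resolve_left h1)
        g ((Finset.mem_union.mp hg).resolve_left h2) hcol

/-! ### Reachability -/

def Adj (f g : Finset V) : Prop := f ≠ g ∧ (f ∩ g).Nonempty

def Rel (S : Finset (Finset V)) (p q : Finset V) : Prop := p ∈ S ∧ q ∈ S ∧ Adj p q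

def Reach (S : Finset (Finset V)) (a b : Finset V) : Prop :=
  Relation.ReflTransGen (Rel S) a b

lemma adj_symm {f g : Finset V} (h : Adj f g) : Adj g f :=
  ⟨h.1.symm, by rw [Finset.inter_comm]; exact h.2⟩

lemma reach_head {S : Finset (Finset V)} {a b c : Finset V}
    (h : Rel S a b) (h' : Reach S b c) : Reach S a c :=
  Relation.ReflTransGen.head h h'

def ReachN (S : Finset (Finset V)) (root : Finset V) : ℕ → Finset V → Prop
  | 0, w => w = root
  | n+1, w => ReachN S root n w ∨ ∃ y, Rel S w y ∧ ReachN S root n y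

lemma reachN_exists {S : Finset (Finset V)} {root w : Finset V}
    (h : Reach S w root) : ∃ n, ReachN S root n w := by
  induction h using Relation.ReflTransGen.head_induction_on with
  | refl => exact ⟨0, rfl⟩
  | head hab _ ih =>
    obtain ⟨n, hn⟩ := ih
    exact ⟨n + 1, Or.inr ⟨_, hab, hn⟩⟩

noncomputable def distR (S : Finset (Finset V)) (root w : Finset V) : ℕ :=
  sInf {n | ReachN S root n w}

lemma distR_root (S : Finset (Finset V)) (root : Finset V) : distR S root root = 0 :=
  Nat.sInf_eq_zero.mpr (Or.inl rfl)

lemma reachN_distR {S : Finset (Finset V)} {root w : Finset V}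
    (h : ∃ n, ReachN S root n w) : ReachN S root (distR S root w) w :=
  Nat.sInf_mem h

lemma eq_root_of_distR_zero {S : Finset (Finset V)} {root w : Finset V}
    (h : ∃ n, ReachN S root n w) (h0 : distR S root w = 0) : w = root := by
  have := reachN_distR h
  rw [h0] at this
  exact this

lemma distR_step {S : Finset (Finset V)} {root w : Finset V}
    (h : ∃ n, ReachN S root n w) (hpos : distR S root w ≠ 0) :
    ∃ y, Rel S w y ∧ distR S root y < distR S root w := by
  have hmem := reachN_distR h
  rcases hd : distR S root w with _ | n
  · exact absurd hd hpos
  · rw [hd] at hmem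
    rcases hmem with h1 | ⟨y, hrel, hy⟩
    · exfalso
      have : distR S root w ≤ n := Nat.sInf_le h1
      omega
    · exact ⟨y, hrel, by
        have : distR S root y ≤ n := Nat.sInf_le hy
        omega⟩

/-- Peeling a maximal-distance vertex keeps the invariant. -/
lemma peel {S' : Finset (Finset V)} {root : Finset V} (hroot : root ∈ S')
    (hinv : ∀ w ∈ S', Reach S' w root) (hcard : 2 ≤ S'.card) :
    ∃ w ∈ S', w ≠ root ∧ (∃ y ∈ S', y ≠ w ∧ Adj w y) ∧
      ∀ x ∈ S'.erase w, Reach (S'.erase w) x root := by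
  have hne : S'.Nonempty := Finset.card_pos.mp (by omega)
  obtain ⟨w, hwS, hwmax⟩ := S'.exists_max_image (distR S' root) hne
  have hex : ∀ x ∈ S', ∃ n, ReachN S' root n x := fun x hx => reachN_exists (hinv x hx)
  -- some vertex different from root
  obtain ⟨x₀, hx₀S, hx₀r⟩ := Finset.exists_mem_ne (show 1 < S'.card by omega) root
  have hx₀pos : distR S' root x₀ ≠ 0 := by
    intro h0
    exact hx₀r (eq_root_of_distR_zero (hex x₀ hx₀S) h0)
  have hwpos : distR S' root w ≠ 0 := by
    have := hwmax x₀ hx₀S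
    omega
  have hwr : w ≠ root := by
    intro h
    rw [h, distR_root] at hwpos
    exact hwpos rfl
  obtain ⟨y, hrel, hylt⟩ := distR_step (hex w hwS) hwpos
  have key : ∀ n, ∀ x, x ∈ S' → x ≠ w → distR S' root x = n →
      Reach (S'.erase w) x root := by
    intro n
    induction n using Nat.strong_induction_on with
    | _ n IH =>
      intro x hx hxw hdx
      by_cases hxr : x = root
      · rw [hxr]; exact Relation.ReflTransGen.refl
      · have hxpos : distR S' root x ≠ 0 := by
          intro h0
          exact hxr (eq_root_of_distR_zero (hex x hx) h0)
        obtain ⟨y', hrel', hy'lt⟩ := distR_step (hex x hx) hxpos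
        have hy'S : y' ∈ S' := hrel'.2.1
        have hy'w : y' ≠ w := by
          intro h
          rw [h] at hy'lt
          have := hwmax x hx
          omega
        have hreach : Reach (S'.erase w) y' root := by
          subst hdx
          exact IH (distR S' root y') hy'lt y' hy'S hy'w rfl
        exact reach_head ⟨Finset.mem_erase.mpr ⟨hxw, hx⟩,
          Finset.mem_erase.mpr ⟨hy'w, hy'S⟩, hrel'.2.2⟩ hreach
  refine ⟨w, hwS, hwr, ⟨y, hrel.2.1, ?_, hrel.2.2⟩, ?_⟩
  · intro h
    rw [h] at hylt
    omega
  · intro x hx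
    obtain ⟨hxw, hxS⟩ := Finset.mem_erase.mp hx
    exact key (distR S' root x) x hxS hxw rfl

/-! ### The tight (design) structure -/

def Stuck (D : ℕ) (S : Finset (Finset V)) : Prop := ∀ h ∈ S, D ≤ (NS S h).card

def Tight (t : ℕ) (S : Finset (Finset V)) (h : Finset V) : Prop :=
  h.card = t ∧ (∀ f ∈ NS S h, (f ∩ h).card = 1 ∧ f.card = t) ∧
    (∀ x ∈ h, vdeg S x = t + 1) ∧ (NS S h).card = t * t

lemma eq_of_sum_eq_card_mul_of_le {α : Type*} {s : Finset α} {f : α → ℕ} {b : ℕ}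
    (h : ∀ a ∈ s, f a ≤ b) (he : s.card * b ≤ ∑ a ∈ s, f a) : ∀ a ∈ s, f a = b := by
  intro a ha
  by_contra hne
  have hlt : f a < b := lt_of_le_of_ne (h a ha) hne
  have : ∑ x ∈ s, f x < ∑ _x ∈ s, b :=
    Finset.sum_lt_sum (fun i hi => h i hi) ⟨a, ha, hlt⟩
  rw [Finset.sum_const, smul_eq_mul] at this
  omega

lemma eq_of_sum_le_card_mul_of_ge {α : Type*} {s : Finset α} {f : α → ℕ} {b : ℕ}
    (h : ∀ a ∈ s, b ≤ f a) (he : (∑ a ∈ s, f a) ≤ s.card * b) : ∀ a ∈ s, f a = b := by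
  intro a ha
  by_contra hne
  have hlt : b < f a := lt_of_le_of_ne (h a ha) (Ne.symm hne)
  have : ∑ _x ∈ s, b < ∑ x ∈ s, f x :=
    Finset.sum_lt_sum (fun i hi => h i hi) ⟨a, ha, hlt⟩
  rw [Finset.sum_const, smul_eq_mul] at this
  omega

lemma vdeg_mono {S E : Finset (Finset V)} (hSE : S ⊆ E) (x : V) :
    vdeg S x ≤ vdeg E x :=
  Finset.card_le_card (Finset.filter_subset_filter _ hSE)

lemma deg2_mono {S E : Finset (Finset V)} (hSE : S ⊆ E) (x : V) :
    deg2 S x ≤ deg2 E x :=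
  Finset.sum_le_sum_of_subset (Finset.filter_subset_filter _ hSE)

lemma filter_split {S : Finset (Finset V)} {e : Finset V} (he : e ∈ S) {x : V} (hx : x ∈ e) :
    S.filter (fun f => x ∈ f) = insert e ((S.erase e).filter fun f => x ∈ f) := by
  ext f
  simp only [Finset.mem_filter, Finset.mem_insert, Finset.mem_erase]
  constructor
  · rintro ⟨hf, hxf⟩
    by_cases hfe : f = e
    · exact Or.inl hfe
    · exact Or.inr ⟨⟨hfe, hf⟩, hxf⟩
  · rintro (rfl | ⟨⟨_, hf⟩, hxf⟩)
    · exact ⟨he, hx⟩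
    · exact ⟨hf, hxf⟩

lemma not_mem_filter_erase {S : Finset (Finset V)} {e : Finset V} (x : V) :
    e ∉ (S.erase e).filter fun f => x ∈ f := by
  simp only [Finset.mem_filter, Finset.mem_erase]
  tauto

lemma vdeg_split {S : Finset (Finset V)} {e : Finset V} (he : e ∈ S) {x : V} (hx : x ∈ e) :
    vdeg S x = ((S.erase e).filter fun f => x ∈ f).card + 1 := by
  rw [vdeg, filter_split he hx, Finset.card_insert_of_notMem (not_mem_filter_erase x)]

lemma deg2_split {S : Finset (Finset V)} {e : Finset V} (he : e ∈ S) {x : V} (hx : x ∈ e) :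
    deg2 S x = (e.card - 1) + ∑ f ∈ (S.erase e).filter (fun f => x ∈ f), (f.card - 1) := by
  rw [deg2, filter_split he hx, Finset.sum_insert (not_mem_filter_erase x)]

/-- The central counting lemma: in a stuck family, a minimum-size edge is tight,
and moreover `D = t*t`. -/
lemma tight_of_min {t D : ℕ} {E S : Finset (Finset V)} (hSE : S ⊆ E)
    (hvd : ∀ x : V, vdeg E x ≤ t + 1) (hd2 : ∀ x : V, deg2 E x < D) (htD : t * t ≤ D)
    (hstuck : Stuck D S) {e : Finset V} (he : e ∈ S) (he2 : 2 ≤ e.card)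
    (hmin : ∀ f ∈ S, e.card ≤ f.card) :
    D = t * t ∧ Tight t S e := by
  obtain ⟨m, hk⟩ : ∃ m, e.card = m + 2 := ⟨e.card - 2, by omega⟩
  set F : V → Finset (Finset V) := (fun x => (S.erase e).filter fun f => x ∈ f) with hF
  have hFS : ∀ x, ∀ f ∈ F x, f ∈ S := by
    intro x f hf
    exact (Finset.mem_erase.mp (Finset.mem_filter.mp hf).1).2
  have hcnt_le : ∀ x ∈ e, (F x).card + 1 ≤ t + 1 := by
    intro x hx
    calc (F x).card + 1 = vdeg S x := (vdeg_split he hx).symm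
      _ ≤ vdeg E x := vdeg_mono hSE x
      _ ≤ t + 1 := hvd x
  have hdeg2S : ∀ x ∈ e, ((F x).card + 1) * (m + 1) ≤ deg2 S x := by
    intro x hx
    have hsum : (F x).card * (m + 1) ≤ ∑ f ∈ F x, (f.card - 1) := by
      have := Finset.card_nsmul_le_sum (F x) (fun f => f.card - 1) (m + 1)
        (fun f hf => by
          have h1 := hmin f (hFS x f hf)
          show m + 1 ≤ f.card - 1
          omega)
      simpa [smul_eq_mul] using this
    have hds : deg2 S x = (e.card - 1) + ∑ f ∈ F x, (f.card - 1) := deg2_split he hx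
    have hexp : ((F x).card + 1) * (m + 1) = (F x).card * (m + 1) + (m + 1) := by ring
    omega
  have hperx : ∀ x ∈ e, (F x).card * (m + 1) + (m + 2) ≤ D := by
    intro x hx
    have h1 := hdeg2S x hx
    have h2 : deg2 S x ≤ deg2 E x := deg2_mono hSE x
    have h3 := hd2 x
    have hexp : ((F x).card + 1) * (m + 1) = (F x).card * (m + 1) + (m + 1) := by ring
    omega
  have hdc : ∑ x ∈ e, (F x).card = ∑ f ∈ S.erase e, (f ∩ e).card := by
    have h1 : ∀ x, (F x).card = ∑ f ∈ S.erase e, (if x ∈ f then 1 else 0) := by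
      intro x
      rw [hF]
      exact Finset.card_filter _ _
    calc ∑ x ∈ e, (F x).card
        = ∑ x ∈ e, ∑ f ∈ S.erase e, (if x ∈ f then 1 else 0) := by
          exact Finset.sum_congr rfl fun x _ => h1 x
      _ = ∑ f ∈ S.erase e, ∑ x ∈ e, (if x ∈ f then 1 else 0) := Finset.sum_comm
      _ = ∑ f ∈ S.erase e, (f ∩ e).card := by
          apply Finset.sum_congr rfl
          intro f _
          rw [← Finset.card_filter]
          congr 1
          rw [Finset.filter_mem_eq_inter, Finset.inter_comm]
  have hNSsum : ∑ f ∈ S.erase e, (f ∩ e).card = ∑ f ∈ NS S e, (f ∩ e).card := by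
    rw [NS, ← Finset.sum_filter_add_sum_filter_not (S.erase e) (fun f => (f ∩ e).Nonempty)]
    have hz : ∑ f ∈ (S.erase e).filter (fun f => ¬ (f ∩ e).Nonempty), (f ∩ e).card = 0 := by
      apply Finset.sum_eq_zero
      intro f hf
      rw [Finset.card_eq_zero]
      exact Finset.not_nonempty_iff_eq_empty.mp (Finset.mem_filter.mp hf).2
    omega
  set N := ∑ x ∈ e, (F x).card with hN
  have hNNS : N = ∑ f ∈ NS S e, (f ∩ e).card := hN.trans (hdc.trans hNSsum)
  have hNSle : (NS S e).card ≤ N := by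
    rw [hNNS]
    calc (NS S e).card = ∑ _f ∈ NS S e, 1 := by simp
      _ ≤ ∑ f ∈ NS S e, (f ∩ e).card :=
          Finset.sum_le_sum fun f hf => Finset.card_pos.mpr (mem_NS.mp hf).2.2
  have hDN : D ≤ N := le_trans (hstuck e he) hNSle
  have hNkt : N ≤ e.card * t := by
    rw [hN]
    calc ∑ x ∈ e, (F x).card ≤ ∑ _x ∈ e, t :=
          Finset.sum_le_sum fun x hx => by have := hcnt_le x hx; omega
      _ = e.card * t := by rw [Finset.sum_const, smul_eq_mul]
  have hsum2 : N * (m + 1) + e.card * (m + 2) ≤ e.card * D := by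
    have h1 : ∑ x ∈ e, ((F x).card * (m + 1) + (m + 2)) ≤ ∑ _x ∈ e, D :=
      Finset.sum_le_sum fun x hx => hperx x hx
    rw [Finset.sum_add_distrib, ← Finset.sum_mul, Finset.sum_const, smul_eq_mul,
      Finset.sum_const, smul_eq_mul] at h1
    exact h1
  have hkk : e.card * e.card ≤ D := by
    rw [hk] at hsum2 ⊢
    have h1 : D * (m + 1) ≤ N * (m + 1) := Nat.mul_le_mul_right _ hDN
    have h2 : (m + 2) * D = D * (m + 1) + D := by ring
    linarith
  obtain ⟨x₁, hx₁⟩ := Finset.card_pos.mp (show 0 < e.card by omega)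
  have hD1 : 1 ≤ D := by have := hd2 x₁; omega
  have ht1 : 1 ≤ t := by
    by_contra h
    have ht0 : t = 0 := by omega
    rw [ht0, mul_zero] at hNkt
    omega
  have hkt : e.card ≤ t :=
    Nat.le_of_mul_le_mul_left (le_trans hkk (le_trans hDN hNkt)) (by omega)
  have htk : t ≤ e.card := by
    have h1 : t * t ≤ t * e.card := by
      calc t * t ≤ D := htD
        _ ≤ N := hDN
        _ ≤ e.card * t := hNkt
        _ = t * e.card := Nat.mul_comm _ _
    exact Nat.le_of_mul_le_mul_left h1 (by omega)
  have hket : e.card = t := le_antisymm hkt htk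
  have hDtt : D = t * t := by
    have : D ≤ t * t := by
      calc D ≤ N := hDN
        _ ≤ e.card * t := hNkt
        _ = t * t := by rw [hket]
    omega
  have hNval : N = t * t := by
    have := hNkt
    rw [hket] at this
    omega
  have hNScard : (NS S e).card = t * t := by
    have h1 := hstuck e he
    omega
  have hcnt_eq : ∀ x ∈ e, (F x).card = t := by
    apply eq_of_sum_eq_card_mul_of_le
    · intro x hx; have := hcnt_le x hx; omega
    · have h : ∑ x ∈ e, (F x).card = t * t := by rw [← hN]; exact hNval
      rw [hket]
      omega
  have hinter1 : ∀ f ∈ NS S e, (f ∩ e).card = 1 := by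
    apply eq_of_sum_le_card_mul_of_ge
    · intro f hf
      show 1 ≤ (f ∩ e).card
      exact Finset.card_pos.mpr (mem_NS.mp hf).2.2
    · have h1 := hNNS
      have h2 := hNval
      rw [hNScard, mul_one]
      omega
  have ht2 : 2 ≤ t := by omega
  have hcard_t : ∀ x ∈ e, ∀ f ∈ F x, f.card = t := by
    intro x hx
    have e1 : deg2 S x = (e.card - 1) + ∑ f ∈ F x, (f.card - 1) := deg2_split he hx
    have e3 : deg2 S x < D := lt_of_le_of_lt (deg2_mono hSE x) (hd2 x)
    have hs : ∑ f ∈ F x, (f.card - 1) ≤ (F x).card * (m + 1) := by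
      rw [hcnt_eq x hx]
      have hp1 : t * (m + 1) + t = t * (m + 2) := by ring
      have hp2 : t * (m + 2) = t * t := by
        rw [show m + 2 = t by omega]
      omega
    have heach := eq_of_sum_le_card_mul_of_ge
      (fun f hf => by
        have h1 := hmin f (hFS x f hf)
        show m + 1 ≤ f.card - 1
        omega) hs
    intro f hf
    have h := heach f hf
    have h2 := hmin f (hFS x f hf)
    omega
  refine ⟨hDtt, hket, ?_, ?_, hNScard⟩
  · intro f hf
    refine ⟨hinter1 f hf, ?_⟩
    obtain ⟨hfS, hfe, hfne⟩ := mem_NS.mp hf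
    obtain ⟨x, hx⟩ := hfne
    have hxe : x ∈ e := (Finset.mem_inter.mp hx).2
    have hxf : x ∈ f := (Finset.mem_inter.mp hx).1
    exact hcard_t x hxe f (Finset.mem_filter.mpr ⟨Finset.mem_erase.mpr ⟨hfe, hfS⟩, hxf⟩)
  · intro x hx
    rw [vdeg_split he hx]
    rw [show ((S.erase e).filter fun f => x ∈ f) = F x from rfl, hcnt_eq x hx]

/-- Every edge reachable from a minimum-size edge is tight. -/
lemma tight_reach {t D : ℕ} {E S : Finset (Finset V)} (hSE : S ⊆ E)
    (hvd : ∀ x : V, vdeg E x ≤ t + 1) (hd2 : ∀ x : V, deg2 E x < D) (htD : t * t ≤ D)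
    (hstuck : Stuck D S) {e₀ : Finset V} (he₀ : e₀ ∈ S) (he2 : 2 ≤ e₀.card)
    (hmin : ∀ f ∈ S, e₀.card ≤ f.card) :
    ∀ f, Reach S f e₀ → f ∈ S → Tight t S f := by
  have hbase := tight_of_min hSE hvd hd2 htD hstuck he₀ he2 hmin
  have ht : e₀.card = t := hbase.2.1
  intro f hf
  induction hf using Relation.ReflTransGen.head_induction_on with
  | refl => intro _; exact hbase.2
  | head hab _ ih =>
    rename_i a c _
    intro _
    have hcS : c ∈ S := hab.2.1
    have hTc : Tight t S c := ih hcS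
    have haNS : a ∈ NS S c := mem_NS.mpr ⟨hab.1, hab.2.2.1, hab.2.2.2⟩
    have hacard : a.card = t := (hTc.2.1 a haNS).2
    have hmin' : ∀ g ∈ S, a.card ≤ g.card := by
      intro g hg
      rw [hacard, ← ht]
      exact hmin g hg
    exact (tight_of_min hSE hvd hd2 htD hstuck hab.1 (by omega) hmin').2

/-- In a tight neighborhood, there are two disjoint neighbors. -/
lemma exists_disjoint_pair {t : ℕ} {S : Finset (Finset V)} {e₀ : Finset V}
    (ht2 : 2 ≤ t) (hte : Tight t S e₀) (he₀ : e₀ ∈ S)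
    (htN : ∀ f ∈ NS S e₀, Tight t S f) :
    ∃ u ∈ NS S e₀, ∃ v ∈ NS S e₀, u ∩ v = ∅ := by
  by_contra hcon
  push_neg at hcon
  obtain ⟨hcardt, hNfacts, hvdeg, hNScard⟩ := hte
  obtain ⟨x, hx⟩ := Finset.card_pos.mp (show 0 < e₀.card by omega)
  have hvx := hvdeg x hx
  have hFx : ((S.erase e₀).filter fun f => x ∈ f).card = t := by
    have := vdeg_split he₀ hx
    omega
  obtain ⟨u, hu⟩ : ∃ u, u ∈ (S.erase e₀).filter fun f => x ∈ f :=
    Finset.card_pos.mp (by omega)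
  have huS : u ∈ S := (Finset.mem_erase.mp (Finset.mem_filter.mp hu).1).2
  have hune : u ≠ e₀ := (Finset.mem_erase.mp (Finset.mem_filter.mp hu).1).1
  have hxu : x ∈ u := (Finset.mem_filter.mp hu).2
  have huNS : u ∈ NS S e₀ :=
    mem_NS.mpr ⟨huS, hune, ⟨x, Finset.mem_inter.mpr ⟨hxu, hx⟩⟩⟩
  have hucard : u.card = t := (hNfacts u huNS).2
  have hue : u ∩ e₀ = {x} := by
    have h1 : (u ∩ e₀).card = 1 := (hNfacts u huNS).1
    have hxm : x ∈ u ∩ e₀ := Finset.mem_inter.mpr ⟨hxu, hx⟩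
    obtain ⟨z, hz⟩ := Finset.card_eq_one.mp h1
    rw [hz] at hxm ⊢
    rw [Finset.mem_singleton.mp hxm]
  set Y := (NS S e₀).filter (fun f => x ∉ f) with hY
  have hYcard : Y.card = t * t - t := by
    have hsplit : (NS S e₀).filter (fun f => x ∈ f)
        = (S.erase e₀).filter fun f => x ∈ f := by
      ext f
      simp only [Finset.mem_filter, mem_NS]
      constructor
      · rintro ⟨⟨hfS, hfne, _⟩, hxf⟩
        exact ⟨Finset.mem_erase.mpr ⟨hfne, hfS⟩, hxf⟩
      · rintro ⟨hfe, hxf⟩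
        obtain ⟨hfne, hfS⟩ := Finset.mem_erase.mp hfe
        exact ⟨⟨hfS, hfne, ⟨x, Finset.mem_inter.mpr ⟨hxf, hx⟩⟩⟩, hxf⟩
    have hYeq : Y = NS S e₀ \ ((NS S e₀).filter (fun f => x ∈ f)) := by
      ext f
      simp only [hY, Finset.mem_filter, Finset.mem_sdiff]
      tauto
    rw [hYeq, Finset.card_sdiff_of_subset (Finset.filter_subset _ _), hsplit, hFx, hNScard]
  -- the injection into (u.erase x) ×ˢ (e₀.erase x)
  have hkey : Y.card ≤ ((u.erase x) ×ˢ (e₀.erase x)).card := by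
    apply Finset.card_le_card_of_injOn
      (fun v => (if h : (v ∩ u).Nonempty then h.choose else x,
                 if h : (v ∩ e₀).Nonempty then h.choose else x))
    · intro v hv
      obtain ⟨hvNS, hxv⟩ := Finset.mem_filter.mp hv
      have hvu : (v ∩ u).Nonempty := by
        have := hcon v hvNS u huNS
        exact this
      have hve : (v ∩ e₀).Nonempty := (mem_NS.mp hvNS).2.2
      simp only [dif_pos hvu, dif_pos hve, Finset.mem_coe, Finset.mem_product]
      constructor
      · have hz := hvu.choose_spec
        obtain ⟨hz1, hz2⟩ := Finset.mem_inter.mp hz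
        exact Finset.mem_erase.mpr ⟨by rintro rfl; exact hxv hz1, hz2⟩
      · have hp := hve.choose_spec
        obtain ⟨hp1, hp2⟩ := Finset.mem_inter.mp hp
        exact Finset.mem_erase.mpr ⟨by rintro rfl; exact hxv hp1, hp2⟩
    · intro v hv v' hv' heq
      rw [Finset.mem_coe] at hv hv'
      obtain ⟨hvNS, hxv⟩ := Finset.mem_filter.mp hv
      obtain ⟨hv'NS, hxv'⟩ := Finset.mem_filter.mp hv'
      by_contra hne
      have hvu : (v ∩ u).Nonempty :=
        (hcon v hvNS u huNS)
      have hve : (v ∩ e₀).Nonempty := (mem_NS.mp hvNS).2.2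
      have hv'u : (v' ∩ u).Nonempty :=
        (hcon v' hv'NS u huNS)
      have hv'e : (v' ∩ e₀).Nonempty := (mem_NS.mp hv'NS).2.2
      simp only [dif_pos hvu, dif_pos hve, dif_pos hv'u, dif_pos hv'e,
        Prod.mk.injEq] at heq
      set z := hvu.choose with hzdef
      set p := hve.choose with hpdef
      have hzv : z ∈ v ∩ u := hvu.choose_spec
      have hpv : p ∈ v ∩ e₀ := hve.choose_spec
      have hzv' : z ∈ v' := by
        have := hv'u.choose_spec
        rw [← heq.1] at this
        exact (Finset.mem_inter.mp this).1
      have hpv' : p ∈ v' := by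
        have := hv'e.choose_spec
        rw [← heq.2] at this
        exact (Finset.mem_inter.mp this).1
      -- v' meets v in the two distinct points z and p
      have hzp : z ≠ p := by
        intro hzp
        have hz_u : z ∈ u := (Finset.mem_inter.mp hzv).2
        have hp_e : p ∈ e₀ := (Finset.mem_inter.mp hpv).2
        have : z ∈ u ∩ e₀ := Finset.mem_inter.mpr ⟨hz_u, hzp ▸ hp_e⟩
        rw [hue, Finset.mem_singleton] at this
        exact hxv (this ▸ (Finset.mem_inter.mp hzv).1)
      have hTv : Tight t S v := htN v hvNS
      have hv'NSv : v' ∈ NS S v := mem_NS.mpr ⟨(mem_NS.mp hv'NS).1, Ne.symm hne,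
        ⟨z, Finset.mem_inter.mpr ⟨hzv', (Finset.mem_inter.mp hzv).1⟩⟩⟩
      have hcard1 : (v' ∩ v).card = 1 := (hTv.2.1 v' hv'NSv).1
      have hsub : ({z, p} : Finset V) ⊆ v' ∩ v := by
        intro y hy
        rcases Finset.mem_insert.mp hy with rfl | hy
        · exact Finset.mem_inter.mpr ⟨hzv', (Finset.mem_inter.mp hzv).1⟩
        · rw [Finset.mem_singleton.mp hy]
          exact Finset.mem_inter.mpr ⟨hpv', (Finset.mem_inter.mp hpv).1⟩
      have h2 : ({z, p} : Finset V).card = 2 := Finset.card_pair hzp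
      have := Finset.card_le_card hsub
      omega
  rw [hYcard, Finset.card_product, Finset.card_erase_of_mem hxu,
    Finset.card_erase_of_mem hx, hucard, hcardt] at hkey
  obtain ⟨s2, hs2⟩ : ∃ s2, t = s2 + 2 := ⟨t - 2, by omega⟩
  rw [hs2] at hkey
  have e1 : (s2 + 2) * (s2 + 2) = s2 * s2 + 4 * s2 + 4 := by ring
  have e2 : (s2 + 2 - 1) * (s2 + 2 - 1) = s2 * s2 + 2 * s2 + 1 := by
    have : s2 + 2 - 1 = s2 + 1 := by omega
    rw [this]; ring
  omega

/-! ### Greedy coloring of a connected design with a root trick -/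

lemma image_card_lt_of_eq {B : Finset (Finset V)} {c : Finset V → ℕ} {u v : Finset V}
    (hu : u ∈ B) (hv : v ∈ B) (huv : u ≠ v) (hcuv : c u = c v) (hB : B.Nonempty) :
    (B.image c).card < B.card := by
  have himg : B.image c = (B.erase u).image c := by
    apply Finset.Subset.antisymm
    · intro a ha
      obtain ⟨f, hf, rfl⟩ := Finset.mem_image.mp ha
      by_cases hfu : f = u
      · exact Finset.mem_image.mpr ⟨v, Finset.mem_erase.mpr ⟨Ne.symm huv, hv⟩,
          by rw [hfu, hcuv]⟩
      · exact Finset.mem_image.mpr ⟨f, Finset.mem_erase.mpr ⟨hfu, hf⟩, rfl⟩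
    · exact Finset.image_subset_image (Finset.erase_subset _ _)
  calc (B.image c).card = ((B.erase u).image c).card := by rw [himg]
    _ ≤ (B.erase u).card := Finset.card_image_le
    _ < B.card := Finset.card_erase_lt_of_mem hu

lemma greedy_case1 {D : ℕ} {C : Finset (Finset V)} {root u v : Finset V}
    (hD : 1 ≤ D)
    (hreg : ∀ w ∈ C, (NS C w).card = D)
    (hu : u ∈ NS C root) (hv : v ∈ NS C root) (huv : u ∩ v = ∅) (huvne : u ≠ v)
    (hroot : root ∈ C)
    (hconn : ∀ w ∈ (C.erase u).erase v, Reach ((C.erase u).erase v) w root) :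
    ∃ c, Proper D C c := by
  set C' := (C.erase u).erase v with hC'
  have hC'C : C' ⊆ C := (Finset.erase_subset _ _).trans (Finset.erase_subset _ _)
  have huC : u ∈ C := (mem_NS.mp hu).1
  have hvC : v ∈ C := (mem_NS.mp hv).1
  have huroot : u ≠ root := (mem_NS.mp hu).2.1
  have hvroot : v ≠ root := (mem_NS.mp hv).2.1
  have hrootC' : root ∈ C' := by
    rw [hC']
    exact Finset.mem_erase.mpr ⟨Ne.symm hvroot, Finset.mem_erase.mpr ⟨Ne.symm huroot, hroot⟩⟩
  have hnotC'u : u ∉ C' := by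
    rw [hC']
    intro h
    exact (Finset.mem_erase.mp (Finset.mem_erase.mp h).2).1 rfl
  have hnotC'v : v ∉ C' := by
    rw [hC']
    intro h
    exact (Finset.mem_erase.mp h).1 rfl
  suffices h : ∀ (n : ℕ) (S' : Finset (Finset V)), S'.card ≤ n → S' ⊆ C' → root ∈ S' →
      (∀ w ∈ S', Reach S' w root) →
      ∀ c : Finset V → ℕ, Proper D (C \ S') c → c u = c v →
      ∃ c', Proper D C c' by
    have hCC' : C \ C' = {u, v} := by
      ext f
      simp only [hC', Finset.mem_sdiff, Finset.mem_erase, Finset.mem_insert,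
        Finset.mem_singleton]
      constructor
      · rintro ⟨hfC, hf⟩
        by_cases h1 : f = u
        · exact Or.inl h1
        · by_cases h2 : f = v
          · exact Or.inr h2
          · exact absurd ⟨h2, h1, hfC⟩ hf
      · rintro (rfl | rfl)
        · exact ⟨huC, fun h => h.2.1 rfl⟩
        · exact ⟨hvC, fun h => h.1 rfl⟩
    apply h C'.card C' le_rfl (Finset.Subset.refl _) hrootC' hconn
      (fun f => if f = u ∨ f = v then 1 else 0)
    · constructor
      · intro f hf
        rw [hCC', Finset.mem_insert, Finset.mem_singleton] at hf
        have : (f = u ∨ f = v) := hf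
        simp only [if_pos this]
        exact Finset.mem_Icc.mpr ⟨le_refl _, hD⟩
      · intro f hf g hg _
        rw [hCC', Finset.mem_insert, Finset.mem_singleton] at hf hg
        rcases hf with rfl | rfl <;> rcases hg with rfl | rfl
        · right; rfl
        · left; exact huv
        · left; rw [Finset.inter_comm]; exact huv
        · right; rfl
    · simp
  intro n
  induction n with
  | zero =>
    intro S' hcard _ hrootS' _ _ _ _
    have := Finset.card_pos.mpr ⟨root, hrootS'⟩
    omega
  | succ n IH =>
    intro S' hcard hsub hrootS' hinv c hc hcuv
    by_cases h1 : S'.card ≤ 1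
    · -- S' = {root} : color the root using the repeated color on u,v
      have hS' : S' = {root} := by
        apply Finset.eq_singleton_iff_unique_mem.mpr
        exact ⟨hrootS', fun y hy => Finset.card_le_one.mp h1 y hy root hrootS'⟩
      have himg : ((NS C root).image c).card < D := by
        have h2 := image_card_lt_of_eq hu hv huvne hcuv ⟨u, hu⟩
        rw [hreg root hroot] at h2
        exact h2
      obtain ⟨δ, hδIcc, hδ⟩ := exists_fresh _ himg
      refine ⟨fun f => if f = root then δ else c f, ?_, ?_⟩
      · intro f hf
        by_cases hfr : f = root
        · simp [hfr, hδIcc]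
        · have hfm : f ∈ C \ S' := Finset.mem_sdiff.mpr ⟨hf, by
            rw [hS']; simp [hfr]⟩
          simpa [hfr] using hc.1 f hfm
      · intro f hf g hg hcol
        have hmem : ∀ a, a ∈ C → a ≠ root → a ∈ C \ S' := by
          intro a ha har
          exact Finset.mem_sdiff.mpr ⟨ha, by rw [hS']; simp [har]⟩
        by_cases hfr : f = root <;> by_cases hgr : g = root
        · right; rw [hfr, hgr]
        · simp only [hfr, if_pos, if_neg hgr] at hcol
          by_cases hng : (g ∩ root).Nonempty
          · exact absurd (Finset.mem_image.mpr
              ⟨g, mem_NS.mpr ⟨hg, hgr, hng⟩, hcol.symm⟩) hδ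
          · left
            rw [hfr, Finset.inter_comm]
            exact Finset.not_nonempty_iff_eq_empty.mp hng
        · simp only [if_neg hfr, hgr, if_pos] at hcol
          by_cases hnf : (f ∩ root).Nonempty
          · exact absurd (Finset.mem_image.mpr
              ⟨f, mem_NS.mpr ⟨hf, hfr, hnf⟩, hcol⟩) hδ
          · left
            rw [hgr]
            exact Finset.not_nonempty_iff_eq_empty.mp hnf
        · simp only [if_neg hfr, if_neg hgr] at hcol
          exact hc.2 f (hmem f hf hfr) g (hmem g hg hgr) hcol
    · -- peel a farthest vertex w and color it
      obtain ⟨w, hwS', hwroot, ⟨y, hyS', hyw, hadj⟩, hinv'⟩ := peel hrootS' hinv (by omega)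
      have hwC' : w ∈ C' := hsub hwS'
      have hwC : w ∈ C := hC'C hwC'
      have hyC : y ∈ C := hC'C (hsub hyS')
      have hyNS : y ∈ NS C w := mem_NS.mpr ⟨hyC, hyw, by
        rw [Finset.inter_comm]; exact hadj.2⟩
      have hsubT : (NS C w).filter (fun f => f ∉ S') ⊆ (NS C w).erase y := by
        intro f hf
        obtain ⟨hf1, hf2⟩ := Finset.mem_filter.mp hf
        exact Finset.mem_erase.mpr ⟨fun h => hf2 (h ▸ hyS'), hf1⟩
      have hTcard : ((NS C w).filter (fun f => f ∉ S')).card < D := by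
        have h2 := Finset.card_le_card hsubT
        have h3 := Finset.card_erase_of_mem hyNS
        have h4 := hreg w hwC
        have h5 := Finset.card_pos.mpr ⟨y, hyNS⟩
        omega
      obtain ⟨δ, hδIcc, hδ⟩ := exists_fresh (((NS C w).filter (fun f => f ∉ S')).image c)
        (lt_of_le_of_lt Finset.card_image_le hTcard)
      have hwu : w ≠ u := fun h => hnotC'u (h ▸ hwC')
      have hwv : w ≠ v := fun h => hnotC'v (h ▸ hwC')
      apply IH (S'.erase w) (by
          have := Finset.card_erase_of_mem hwS'
          omega)
        ((Finset.erase_subset _ _).trans hsub)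
        (Finset.mem_erase.mpr ⟨Ne.symm hwroot, hrootS'⟩) hinv'
        (fun f => if f = w then δ else c f)
      · constructor
        · intro f hf
          obtain ⟨hfC, hfns⟩ := Finset.mem_sdiff.mp hf
          by_cases hfw : f = w
          · simp [hfw, hδIcc]
          · have hfm : f ∈ C \ S' := Finset.mem_sdiff.mpr ⟨hfC, fun hfS' =>
              hfns (Finset.mem_erase.mpr ⟨hfw, hfS'⟩)⟩
            simpa [hfw] using hc.1 f hfm
        · intro f hf g hg hcol
          obtain ⟨hfC, hfns⟩ := Finset.mem_sdiff.mp hf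
          obtain ⟨hgC, hgns⟩ := Finset.mem_sdiff.mp hg
          have hmem : ∀ a, a ∈ C → a ∉ S'.erase w → a ≠ w → a ∈ C \ S' := by
            intro a ha hans haw
            exact Finset.mem_sdiff.mpr ⟨ha, fun haS' =>
              hans (Finset.mem_erase.mpr ⟨haw, haS'⟩)⟩
          by_cases hfw : f = w <;> by_cases hgw : g = w
          · right; rw [hfw, hgw]
          · simp only [hfw, if_pos, if_neg hgw] at hcol
            have hgm : g ∈ C \ S' := hmem g hgC hgns hgw
            by_cases hng : (g ∩ w).Nonempty
            · have : g ∈ (NS C w).filter (fun f => f ∉ S') := Finset.mem_filter.mpr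
                ⟨mem_NS.mpr ⟨hgC, hgw, hng⟩, (Finset.mem_sdiff.mp hgm).2⟩
              exact absurd (Finset.mem_image.mpr ⟨g, this, hcol.symm⟩) hδ
            · left
              rw [hfw, Finset.inter_comm]
              exact Finset.not_nonempty_iff_eq_empty.mp hng
          · simp only [if_neg hfw, hgw, if_pos] at hcol
            have hfm : f ∈ C \ S' := hmem f hfC hfns hfw
            by_cases hnf : (f ∩ w).Nonempty
            · have : f ∈ (NS C w).filter (fun f => f ∉ S') := Finset.mem_filter.mpr
                ⟨mem_NS.mpr ⟨hfC, hfw, hnf⟩, (Finset.mem_sdiff.mp hfm).2⟩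
              exact absurd (Finset.mem_image.mpr ⟨f, this, hcol⟩) hδ
            · left
              rw [hgw]
              exact Finset.not_nonempty_iff_eq_empty.mp hnf
          · simp only [if_neg hfw, if_neg hgw] at hcol
            exact hc.2 f (hmem f hfC hfns hfw) g (hmem g hgC hgns hgw) hcol
      · simp only [if_neg hwu.symm, if_neg hwv.symm]
        · exact hcuv

/-! ### Surgery along a small cut -/

lemma recolor_ne {D : ℕ} {H : Finset (Finset V)} {c : Finset V → ℕ} {u v : Finset V}
    (hc : Proper D H c) (hu : u ∈ H) (hv : v ∈ H) (huvne : u ≠ v)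
    (hκ : (NS H u).card + 2 ≤ D) :
    ∃ c', Proper D H c' ∧ c' u ≠ c' v ∧ ∀ f, f ≠ u → c' f = c f := by
  obtain ⟨δ, hδIcc, hδ⟩ := exists_fresh (D := D) (insert (c v) ((NS H u).image c)) (by
    have h1 := Finset.card_image_le (f := c) (s := NS H u)
    have h2 := Finset.card_insert_le (c v) ((NS H u).image c)
    omega)
  refine ⟨fun f => if f = u then δ else c f, ⟨?_, ?_⟩, ?_, ?_⟩
  · intro f hf
    by_cases hfu : f = u
    · simp [hfu, hδIcc]
    · simpa [hfu] using hc.1 f hf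
  · intro f hf g hg hcol
    by_cases hfu : f = u <;> by_cases hgu : g = u
    · right; rw [hfu, hgu]
    · simp only [hfu, if_pos, if_neg hgu] at hcol
      by_cases hng : (g ∩ u).Nonempty
      · exact absurd (Finset.mem_insert.mpr (Or.inr (Finset.mem_image.mpr
          ⟨g, mem_NS.mpr ⟨hg, hgu, hng⟩, hcol.symm⟩))) hδ
      · left
        rw [hfu, Finset.inter_comm]
        exact Finset.not_nonempty_iff_eq_empty.mp hng
    · simp only [if_neg hfu, hgu, if_pos] at hcol
      by_cases hnf : (f ∩ u).Nonempty
      · exact absurd (Finset.mem_insert.mpr (Or.inr (Finset.mem_image.mpr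
          ⟨f, mem_NS.mpr ⟨hf, hfu, hnf⟩, hcol⟩))) hδ
      · left
        rw [hgu]
        exact Finset.not_nonempty_iff_eq_empty.mp hnf
    · simp only [if_neg hfu, if_neg hgu] at hcol
      exact hc.2 f hf g hg hcol
  · simp only [if_pos rfl, if_neg (Ne.symm huvne)]
    intro h
    exact hδ (Finset.mem_insert.mpr (Or.inl h))
  · intro f hf
    simp [hf]

lemma recolor_eq {D : ℕ} {H : Finset (Finset V)} {c : Finset V → ℕ} {u v : Finset V}
    (hc : Proper D H c) (hu : u ∈ H) (hv : v ∈ H) (huv : u ∩ v = ∅) (huvne : u ≠ v)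
    (hκ : (NS H u).card + (NS H v).card < D) :
    ∃ c', Proper D H c' ∧ c' u = c' v ∧ ∀ f, f ≠ u → f ≠ v → c' f = c f := by
  obtain ⟨δ, hδIcc, hδ⟩ := exists_fresh (D := D) ((NS H u).image c ∪ (NS H v).image c) (by
    have h1 := Finset.card_image_le (f := c) (s := NS H u)
    have h2 := Finset.card_image_le (f := c) (s := NS H v)
    have h3 := Finset.card_union_le ((NS H u).image c) ((NS H v).image c)
    omega)
  have hδu : ∀ g ∈ NS H u, c g ≠ δ := by
    intro g hg h
    exact hδ (Finset.mem_union.mpr (Or.inl (Finset.mem_image.mpr ⟨g, hg, h⟩)))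
  have hδv : ∀ g ∈ NS H v, c g ≠ δ := by
    intro g hg h
    exact hδ (Finset.mem_union.mpr (Or.inr (Finset.mem_image.mpr ⟨g, hg, h⟩)))
  refine ⟨fun f => if f = u ∨ f = v then δ else c f, ⟨?_, ?_⟩, ?_, ?_⟩
  · intro f hf
    by_cases hfu : f = u ∨ f = v
    · simp [hfu, hδIcc]
    · simpa [hfu] using hc.1 f hf
  · intro f hf g hg hcol
    by_cases hfu : f = u ∨ f = v <;> by_cases hgu : g = u ∨ g = v
    · rcases hfu with rfl | rfl <;> rcases hgu with rfl | rfl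
      · right; rfl
      · left; exact huv
      · left; rw [Finset.inter_comm]; exact huv
      · right; rfl
    · simp only [if_pos hfu, if_neg hgu] at hcol
      push_neg at hgu
      by_cases hng : (g ∩ f).Nonempty
      · exfalso
        rcases hfu with rfl | rfl
        · exact hδu g (mem_NS.mpr ⟨hg, hgu.1, hng⟩) hcol.symm
        · exact hδv g (mem_NS.mpr ⟨hg, hgu.2, hng⟩) hcol.symm
      · left
        rw [Finset.inter_comm]
        exact Finset.not_nonempty_iff_eq_empty.mp hng
    · simp only [if_neg hfu, if_pos hgu] at hcol
      push_neg at hfu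
      by_cases hnf : (f ∩ g).Nonempty
      · exfalso
        rcases hgu with rfl | rfl
        · exact hδu f (mem_NS.mpr ⟨hf, hfu.1, hnf⟩) hcol
        · exact hδv f (mem_NS.mpr ⟨hf, hfu.2, hnf⟩) hcol
      · left
        exact Finset.not_nonempty_iff_eq_empty.mp hnf
    · simp only [if_neg hfu, if_neg hgu] at hcol
      exact hc.2 f hf g hg hcol
  · simp
  · intro f hfu hfv
    simp [hfu, hfv]

lemma swap_mem_Icc {D x y : ℕ} (hx : x ∈ Finset.Icc 1 D) (hy : y ∈ Finset.Icc 1 D) :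
    ∀ z ∈ Finset.Icc 1 D, Equiv.swap x y z ∈ Finset.Icc 1 D := by
  intro z hz
  rw [Equiv.swap_apply_def]
  split_ifs <;> assumption

lemma case2_surgery {D : ℕ} {C : Finset (Finset V)} {E : Finset (Finset V)}
    {root u v : Finset V}
    (hCE : C ⊆ E) (hD4 : 4 ≤ D)
    (hreg : ∀ w ∈ C, (NS C w).card = D)
    (hu : u ∈ NS C root) (hv : v ∈ NS C root) (huv : u ∩ v = ∅) (huvne : u ≠ v)
    (hroot : root ∈ C)
    (hdisc : ∃ f ∈ (C.erase u).erase v, ¬ Reach ((C.erase u).erase v) f root)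
    (IH : ∀ S' : Finset (Finset V), S' ⊆ E → S'.card < C.card → ∃ c, Proper D S' c) :
    ∃ c, Proper D C c := by
  set C' := (C.erase u).erase v with hC'
  have hC'C : C' ⊆ C := (Finset.erase_subset _ _).trans (Finset.erase_subset _ _)
  have huC : u ∈ C := (mem_NS.mp hu).1
  have hvC : v ∈ C := (mem_NS.mp hv).1
  have huroot : u ≠ root := (mem_NS.mp hu).2.1
  have hvroot : v ≠ root := (mem_NS.mp hv).2.1
  have hrootC' : root ∈ C' := by
    rw [hC']
    exact Finset.mem_erase.mpr ⟨Ne.symm hvroot, Finset.mem_erase.mpr ⟨Ne.symm huroot, hroot⟩⟩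
  have hnotC'u : u ∉ C' := by
    rw [hC']
    intro h
    exact (Finset.mem_erase.mp (Finset.mem_erase.mp h).2).1 rfl
  have hnotC'v : v ∉ C' := by
    rw [hC']
    intro h
    exact (Finset.mem_erase.mp h).1 rfl
  have hmemC' : ∀ f, f ∈ C' ↔ f ∈ C ∧ f ≠ u ∧ f ≠ v := by
    intro f
    rw [hC']
    simp only [Finset.mem_erase]
    tauto
  set A := C'.filter (fun f => Reach C' f root) with hA
  set B := C'.filter (fun f => ¬ Reach C' f root) with hB
  have hrootA : root ∈ A := Finset.mem_filter.mpr ⟨hrootC', Relation.ReflTransGen.refl⟩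
  have hBne : B.Nonempty := by
    obtain ⟨f, hf1, hf2⟩ := hdisc
    exact ⟨f, Finset.mem_filter.mpr ⟨hf1, hf2⟩⟩
  have hAC' : A ⊆ C' := Finset.filter_subset _ _
  have hBC' : B ⊆ C' := Finset.filter_subset _ _
  have hABmem : ∀ f, f ∈ C' ↔ f ∈ A ∨ f ∈ B := by
    intro f
    simp only [hA, hB, Finset.mem_filter]
    tauto
  have hABdisj : Disjoint A B := by
    rw [Finset.disjoint_left]
    intro f hfA hfB
    exact (Finset.mem_filter.mp hfB).2 (Finset.mem_filter.mp hfA).2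
  have hAB : ∀ f ∈ A, ∀ g ∈ B, f ∩ g = ∅ := by
    intro f hf g hg
    by_contra hne
    have hfg : f ≠ g := by
      intro h
      exact (Finset.mem_filter.mp hg).2 (h ▸ (Finset.mem_filter.mp hf).2)
    have hreach : Reach C' g root :=
      reach_head ⟨hBC' hg, hAC' hf, ⟨hfg.symm, by
        rw [Finset.inter_comm]
        exact Finset.nonempty_iff_ne_empty.mpr hne⟩⟩ (Finset.mem_filter.mp hf).2
    exact (Finset.mem_filter.mp hg).2 hreach
  set HA := insert u (insert v A) with hHA
  set HB := insert u (insert v B) with hHB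
  have hmemHA : ∀ f, f ∈ HA ↔ f = u ∨ f = v ∨ f ∈ A := by
    intro f
    simp [hHA]
  have hmemHB : ∀ f, f ∈ HB ↔ f = u ∨ f = v ∨ f ∈ B := by
    intro f
    simp [hHB]
  have hHAC : HA ⊆ C := by
    intro f hf
    rcases (hmemHA f).mp hf with rfl | rfl | hfA
    · exact huC
    · exact hvC
    · exact hC'C (hAC' hfA)
  have hHBC : HB ⊆ C := by
    intro f hf
    rcases (hmemHB f).mp hf with rfl | rfl | hfB
    · exact huC
    · exact hvC
    · exact hC'C (hBC' hfB)
  have hcardC' : C'.card + 2 = C.card := by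
    have h1 : (C.erase u).card = C.card - 1 := Finset.card_erase_of_mem huC
    have h2 : C'.card = (C.erase u).card - 1 :=
      Finset.card_erase_of_mem (Finset.mem_erase.mpr ⟨huvne.symm, hvC⟩)
    have h3 : 0 < C.card := Finset.card_pos.mpr ⟨u, huC⟩
    have h4 : 0 < (C.erase u).card :=
      Finset.card_pos.mpr ⟨v, Finset.mem_erase.mpr ⟨huvne.symm, hvC⟩⟩
    omega
  have hcardAB : A.card + B.card = C'.card := by
    have := Finset.card_filter_add_card_filter_not
      (s := C') (p := fun f => Reach C' f root)
    rw [← hA, ← hB] at this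
    exact this
  have hHAcard : HA.card < C.card := by
    have h1 : HA.card ≤ A.card + 2 :=
      le_trans (Finset.card_insert_le _ _) (by
        have := Finset.card_insert_le v A
        omega)
    have h2 : 0 < B.card := Finset.card_pos.mpr hBne
    omega
  have hHBcard : HB.card < C.card := by
    have h1 : HB.card ≤ B.card + 2 :=
      le_trans (Finset.card_insert_le _ _) (by
        have := Finset.card_insert_le v B
        omega)
    have h2 : 0 < A.card := Finset.card_pos.mpr ⟨root, hrootA⟩
    omega
  obtain ⟨cA, hcA⟩ := IH HA (hHAC.trans hCE) hHAcard
  obtain ⟨cB, hcB⟩ := IH HB (hHBC.trans hCE) hHBcard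
  have huHA : u ∈ HA := (hmemHA u).mpr (Or.inl rfl)
  have hvHA : v ∈ HA := (hmemHA v).mpr (Or.inr (Or.inl rfl))
  have huHB : u ∈ HB := (hmemHB u).mpr (Or.inl rfl)
  have hvHB : v ∈ HB := (hmemHB v).mpr (Or.inr (Or.inl rfl))
  have hvu_empty : ¬ (v ∩ u).Nonempty := by
    rw [Finset.inter_comm]
    rw [huv]
    exact Finset.not_nonempty_empty
  have huv_empty : ¬ (u ∩ v).Nonempty := by
    rw [huv]
    exact Finset.not_nonempty_empty
  -- neighborhoods in the parts
  have hNSHAu : NS HA u = A.filter (fun f => (f ∩ u).Nonempty) := by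
    ext f
    rw [mem_NS, Finset.mem_filter, hmemHA f]
    constructor
    · rintro ⟨(rfl | rfl | hfA), hfne, hfint⟩
      · exact absurd rfl hfne
      · exact absurd hfint hvu_empty
      · exact ⟨hfA, hfint⟩
    · rintro ⟨hfA, hfint⟩
      refine ⟨Or.inr (Or.inr hfA), ?_, hfint⟩
      intro h
      exact hnotC'u (h ▸ hAC' hfA)
  have hNSHAv : NS HA v = A.filter (fun f => (f ∩ v).Nonempty) := by
    ext f
    rw [mem_NS, Finset.mem_filter, hmemHA f]
    constructor
    · rintro ⟨(rfl | rfl | hfA), hfne, hfint⟩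
      · exact absurd hfint huv_empty
      · exact absurd rfl hfne
      · exact ⟨hfA, hfint⟩
    · rintro ⟨hfA, hfint⟩
      refine ⟨Or.inr (Or.inr hfA), ?_, hfint⟩
      intro h
      exact hnotC'v (h ▸ hAC' hfA)
  have hNSHBu : NS HB u = B.filter (fun f => (f ∩ u).Nonempty) := by
    ext f
    rw [mem_NS, Finset.mem_filter, hmemHB f]
    constructor
    · rintro ⟨(rfl | rfl | hfB), hfne, hfint⟩
      · exact absurd rfl hfne
      · exact absurd hfint hvu_empty
      · exact ⟨hfB, hfint⟩
    · rintro ⟨hfB, hfint⟩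
      refine ⟨Or.inr (Or.inr hfB), ?_, hfint⟩
      intro h
      exact hnotC'u (h ▸ hBC' hfB)
  have hNSHBv : NS HB v = B.filter (fun f => (f ∩ v).Nonempty) := by
    ext f
    rw [mem_NS, Finset.mem_filter, hmemHB f]
    constructor
    · rintro ⟨(rfl | rfl | hfB), hfne, hfint⟩
      · exact absurd hfint huv_empty
      · exact absurd rfl hfne
      · exact ⟨hfB, hfint⟩
    · rintro ⟨hfB, hfint⟩
      refine ⟨Or.inr (Or.inr hfB), ?_, hfint⟩
      intro h
      exact hnotC'v (h ▸ hBC' hfB)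
  have hsplit : ∀ w : Finset V, w ∈ C → w ≠ u → w ≠ v → (w ∩ u = ∅ ∨ w ∩ v = ∅) →
      True := fun _ _ _ _ _ => trivial
  have hsplitu : (A.filter (fun f => (f ∩ u).Nonempty)).card
      + (B.filter (fun f => (f ∩ u).Nonempty)).card = D := by
    have hunion : NS C u
        = A.filter (fun f => (f ∩ u).Nonempty) ∪ B.filter (fun f => (f ∩ u).Nonempty) := by
      ext f
      constructor
      · intro hfNS
        obtain ⟨hfC, hfne, hfint⟩ := mem_NS.mp hfNS
        have hfv : f ≠ v := by
          rintro rfl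
          exact hvu_empty hfint
        rcases (hABmem f).mp ((hmemC' f).mpr ⟨hfC, hfne, hfv⟩) with h | h
        · exact Finset.mem_union.mpr (Or.inl (Finset.mem_filter.mpr ⟨h, hfint⟩))
        · exact Finset.mem_union.mpr (Or.inr (Finset.mem_filter.mpr ⟨h, hfint⟩))
      · intro hfm
        rcases Finset.mem_union.mp hfm with h | h
        · obtain ⟨hfA, hfint⟩ := Finset.mem_filter.mp h
          have h3 := (hmemC' f).mp (hAC' hfA)
          exact mem_NS.mpr ⟨h3.1, h3.2.1, hfint⟩
        · obtain ⟨hfB, hfint⟩ := Finset.mem_filter.mp h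
          have h3 := (hmemC' f).mp (hBC' hfB)
          exact mem_NS.mpr ⟨h3.1, h3.2.1, hfint⟩
    have hdisj2 : Disjoint (A.filter (fun f => (f ∩ u).Nonempty))
        (B.filter (fun f => (f ∩ u).Nonempty)) :=
      Finset.disjoint_filter_filter hABdisj
    rw [← hreg u huC, hunion, Finset.card_union_of_disjoint hdisj2]
  have hsplitv : (A.filter (fun f => (f ∩ v).Nonempty)).card
      + (B.filter (fun f => (f ∩ v).Nonempty)).card = D := by
    have hunion : NS C v
        = A.filter (fun f => (f ∩ v).Nonempty) ∪ B.filter (fun f => (f ∩ v).Nonempty) := by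
      ext f
      constructor
      · intro hfNS
        obtain ⟨hfC, hfne, hfint⟩ := mem_NS.mp hfNS
        have hfu2 : f ≠ u := by
          rintro rfl
          exact huv_empty hfint
        rcases (hABmem f).mp ((hmemC' f).mpr ⟨hfC, hfu2, hfne⟩) with h | h
        · exact Finset.mem_union.mpr (Or.inl (Finset.mem_filter.mpr ⟨h, hfint⟩))
        · exact Finset.mem_union.mpr (Or.inr (Finset.mem_filter.mpr ⟨h, hfint⟩))
      · intro hfm
        rcases Finset.mem_union.mp hfm with h | h
        · obtain ⟨hfA, hfint⟩ := Finset.mem_filter.mp h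
          have h3 := (hmemC' f).mp (hAC' hfA)
          exact mem_NS.mpr ⟨h3.1, h3.2.2, hfint⟩
        · obtain ⟨hfB, hfint⟩ := Finset.mem_filter.mp h
          have h3 := (hmemC' f).mp (hBC' hfB)
          exact mem_NS.mpr ⟨h3.1, h3.2.2, hfint⟩
    have hdisj2 : Disjoint (A.filter (fun f => (f ∩ v).Nonempty))
        (B.filter (fun f => (f ∩ v).Nonempty)) :=
      Finset.disjoint_filter_filter hABdisj
    rw [← hreg v hvC, hunion, Finset.card_union_of_disjoint hdisj2]
  -- fix the bits: make the u,v colors agree in pattern on both sides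
  have hfix : ∃ cA' cB', Proper D HA cA' ∧ Proper D HB cB' ∧
      ((cA' u = cA' v ∧ cB' u = cB' v) ∨ (cA' u ≠ cA' v ∧ cB' u ≠ cB' v)) := by
    by_cases hA1 : cA u = cA v <;> by_cases hB1 : cB u = cB v
    · exact ⟨cA, cB, hcA, hcB, Or.inl ⟨hA1, hB1⟩⟩
    · -- A-side "=", B-side "≠"
      by_cases hκ : (NS HA u).card + 2 ≤ D
      · obtain ⟨cA', h1, h2, _⟩ := recolor_ne hcA huHA hvHA huvne hκ
        exact ⟨cA', cB, h1, hcB, Or.inr ⟨h2, hB1⟩⟩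
      · by_cases hκ2 : (NS HA v).card + 2 ≤ D
        · obtain ⟨cA', h1, h2, _⟩ := recolor_ne hcA hvHA huHA huvne.symm hκ2
          exact ⟨cA', cB, h1, hcB, Or.inr ⟨fun h => h2 h.symm, hB1⟩⟩
        · have hκB : (NS HB u).card + (NS HB v).card < D := by
            rw [hNSHBu, hNSHBv]
            rw [hNSHAu] at hκ
            rw [hNSHAv] at hκ2
            omega
          obtain ⟨cB', h1, h2, _⟩ := recolor_eq hcB huHB hvHB huv huvne hκB
          exact ⟨cA, cB', hcA, h1, Or.inl ⟨hA1, h2⟩⟩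
    · -- A-side "≠", B-side "="
      by_cases hκ : (NS HB u).card + 2 ≤ D
      · obtain ⟨cB', h1, h2, _⟩ := recolor_ne hcB huHB hvHB huvne hκ
        exact ⟨cA, cB', hcA, h1, Or.inr ⟨hA1, h2⟩⟩
      · by_cases hκ2 : (NS HB v).card + 2 ≤ D
        · obtain ⟨cB', h1, h2, _⟩ := recolor_ne hcB hvHB huHB huvne.symm hκ2
          exact ⟨cA, cB', hcA, h1, Or.inr ⟨hA1, fun h => h2 h.symm⟩⟩
        · have hκA : (NS HA u).card + (NS HA v).card < D := by
            rw [hNSHAu, hNSHAv]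
            rw [hNSHBu] at hκ
            rw [hNSHBv] at hκ2
            omega
          obtain ⟨cA', h1, h2, _⟩ := recolor_eq hcA huHA hvHA huv huvne hκA
          exact ⟨cA', cB, h1, hcB, Or.inl ⟨h2, hB1⟩⟩
    · exact ⟨cA, cB, hcA, hcB, Or.inr ⟨hA1, hB1⟩⟩
  obtain ⟨cA', cB', hcA', hcB', hbits⟩ := hfix
  -- a color permutation matching the B-side to the A-side on u,v
  have haIcc : cA' u ∈ Finset.Icc 1 D := hcA'.1 u huHA
  have haIcc2 : cA' v ∈ Finset.Icc 1 D := hcA'.1 v hvHA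
  have hbIcc : cB' u ∈ Finset.Icc 1 D := hcB'.1 u huHB
  have hbIcc2 : cB' v ∈ Finset.Icc 1 D := hcB'.1 v hvHB
  obtain ⟨π, hπu, hπv, hπIcc⟩ : ∃ π : Equiv.Perm ℕ, π (cB' u) = cA' u ∧ π (cB' v) = cA' v ∧
      ∀ z ∈ Finset.Icc 1 D, π z ∈ Finset.Icc 1 D := by
    rcases hbits with ⟨hAeq, hBeq⟩ | ⟨hAne, hBne2⟩
    · refine ⟨Equiv.swap (cB' u) (cA' u), Equiv.swap_apply_left _ _, ?_,
        swap_mem_Icc hbIcc haIcc⟩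
      rw [← hBeq, ← hAeq]
      exact Equiv.swap_apply_left _ _
    · set σ₁ := Equiv.swap (cB' u) (cA' u) with hσ₁
      set σ₂ := Equiv.swap (σ₁ (cB' v)) (cA' v) with hσ₂
      have hne1 : σ₁ (cB' v) ≠ cA' u := by
        intro h
        have h3 : σ₁ (cB' u) = cA' u := Equiv.swap_apply_left _ _
        have h4 : cB' v = cB' u := σ₁.injective (h.trans h3.symm)
        exact hBne2 h4.symm
      refine ⟨σ₁.trans σ₂, ?_, ?_, ?_⟩
      · have h1 : σ₁ (cB' u) = cA' u := Equiv.swap_apply_left _ _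
        simp only [Equiv.trans_apply, h1]
        rw [hσ₂]
        exact Equiv.swap_apply_of_ne_of_ne hne1.symm hAne
      · simp only [Equiv.trans_apply]
        rw [hσ₂]
        exact Equiv.swap_apply_left _ _
      · intro z hz
        simp only [Equiv.trans_apply]
        have hσ₁v : σ₁ (cB' v) ∈ Finset.Icc 1 D := swap_mem_Icc hbIcc haIcc _ hbIcc2
        exact swap_mem_Icc hσ₁v haIcc2 _ (swap_mem_Icc hbIcc haIcc z hz)
  -- the glued coloring
  have hmemCsplit : ∀ f, f ∈ C → f ∈ HA ∨ f ∈ B := by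
    intro f hf
    by_cases h1 : f = u
    · exact Or.inl ((hmemHA f).mpr (Or.inl h1))
    · by_cases h2 : f = v
      · exact Or.inl ((hmemHA f).mpr (Or.inr (Or.inl h2)))
      · rcases (hABmem f).mp ((hmemC' f).mpr ⟨hf, h1, h2⟩) with h | h
        · exact Or.inl ((hmemHA f).mpr (Or.inr (Or.inr h)))
        · exact Or.inr h
  have hBHB : B ⊆ HB := by
    intro f hf
    exact (hmemHB f).mpr (Or.inr (Or.inr hf))
  have hBnotHA : ∀ f ∈ B, f ∉ HA → True := fun _ _ _ => trivial
  refine ⟨fun f => if f ∈ HA then cA' f else π (cB' f), ?_, ?_⟩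
  · intro f hf
    by_cases h1 : f ∈ HA
    · simp only [if_pos h1]
      exact hcA'.1 f h1
    · simp only [if_neg h1]
      have hfB : f ∈ B := ((hmemCsplit f hf).resolve_left h1)
      exact hπIcc _ (hcB'.1 f (hBHB hfB))
  · intro f hf g hg hcol
    have key : ∀ a b : Finset V, a ∈ C → b ∈ C → a ∈ HA → b ∉ HA →
        (if a ∈ HA then cA' a else π (cB' a)) = (if b ∈ HA then cA' b else π (cB' b)) →
        a ∩ b = ∅ ∨ a = b := by
      intro a b haC hbC haHA hbHA hcol2
      simp only [if_pos haHA, if_neg hbHA] at hcol2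
      have hbB : b ∈ B := ((hmemCsplit b hbC).resolve_left hbHA)
      rcases (hmemHA a).mp haHA with h5 | h5 | haA
      · -- a = u : transfer through π
        subst h5
        have h6 : π (cB' a) = π (cB' b) := by rw [hπu]; exact hcol2
        have hcolB : cB' a = cB' b := π.injective h6
        have h7 := hcB'.2 a huHB b (hBHB hbB) hcolB
        rcases h7 with h | rfl
        · exact Or.inl h
        · exact absurd (hBC' hbB) hnotC'u
      · subst h5
        have h6 : π (cB' a) = π (cB' b) := by rw [hπv]; exact hcol2
        have hcolB : cB' a = cB' b := π.injective h6
        have h7 := hcB'.2 a hvHB b (hBHB hbB) hcolB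
        rcases h7 with h | rfl
        · exact Or.inl h
        · exact absurd (hBC' hbB) hnotC'v
      · exact Or.inl (hAB a haA b hbB)
    by_cases h1 : f ∈ HA <;> by_cases h2 : g ∈ HA
    · simp only [if_pos h1, if_pos h2] at hcol
      exact hcA'.2 f h1 g h2 hcol
    · exact key f g hf hg h1 h2 hcol
    · rcases key g f hg hf h2 h1 hcol.symm with h | h
      · left
        rw [Finset.inter_comm]
        exact h
      · right
        exact h.symm
    · simp only [if_neg h1, if_neg h2] at hcol
      have hfB : f ∈ B := ((hmemCsplit f hf).resolve_left h1)
      have hgB : g ∈ B := ((hmemCsplit g hg).resolve_left h2)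
      exact hcB'.2 f (hBHB hfB) g (hBHB hgB) (π.injective hcol)

/-! ### Main induction -/

lemma main_lemma {t D : ℕ} {E : Finset (Finset V)}
    (hE2 : ∀ e ∈ E, 2 ≤ e.card)
    (hvd : ∀ x : V, vdeg E x ≤ t + 1) (hd2 : ∀ x : V, deg2 E x < D) (htD : t * t ≤ D) :
    ∀ (n : ℕ) (S : Finset (Finset V)), S ⊆ E → S.card ≤ n → ∃ c, Proper D S c := by
  intro n
  induction n with
  | zero =>
    intro S _ hcard
    have hS : S = ∅ := Finset.card_eq_zero.mp (by omega)
    exact ⟨fun _ => 1, by simp [hS, Proper]⟩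
  | succ n IH =>
    intro S hSE hcard
    rcases Finset.eq_empty_or_nonempty S with rfl | hSne
    · exact ⟨fun _ => 1, by simp [Proper]⟩
    by_cases hpeel : ∃ h ∈ S, (NS S h).card < D
    · obtain ⟨h, hhS, hhN⟩ := hpeel
      obtain ⟨c, hc⟩ := IH (S.erase h) ((Finset.erase_subset _ _).trans hSE) (by
        have h1 := Finset.card_erase_of_mem hhS
        have h2 := Finset.card_pos.mpr ⟨h, hhS⟩
        omega)
      exact proper_extend hhS hc hhN
    · -- stuck case
      push_neg at hpeel
      have hstuck : Stuck D S := fun h hh => hpeel h hh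
      obtain ⟨e₀, he₀S, hmin⟩ := S.exists_min_image (fun f => f.card) hSne
      have he2 : 2 ≤ e₀.card := hE2 e₀ (hSE he₀S)
      have hTR := tight_reach hSE hvd hd2 htD hstuck he₀S he2 hmin
      obtain ⟨hDtt, hT0⟩ := tight_of_min hSE hvd hd2 htD hstuck he₀S he2 hmin
      have het : e₀.card = t := hT0.1
      have ht2 : 2 ≤ t := by omega
      have hD4 : 4 ≤ D := by
        have h4 : 2 * 2 ≤ t * t := Nat.mul_le_mul ht2 ht2
        omega
      set C := S.filter (fun f => Reach S f e₀) with hC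
      have hCsub : C ⊆ S := Finset.filter_subset _ _
      have he₀C : e₀ ∈ C := Finset.mem_filter.mpr ⟨he₀S, Relation.ReflTransGen.refl⟩
      have hCtight : ∀ f ∈ C, Tight t S f := fun f hf =>
        hTR f (Finset.mem_filter.mp hf).2 (Finset.mem_filter.mp hf).1
      have hclosed : ∀ f ∈ C, ∀ g ∈ S, (g ∩ f).Nonempty → g ∈ C := by
        intro f hf g hg hint
        by_cases hgf : g = f
        · rw [hgf]; exact hf
        · exact Finset.mem_filter.mpr ⟨hg,
            reach_head ⟨hg, hCsub hf, ⟨hgf, hint⟩⟩ (Finset.mem_filter.mp hf).2⟩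
      have hNSC : ∀ f ∈ C, NS C f = NS S f := by
        intro f hf
        ext g
        rw [mem_NS, mem_NS]
        constructor
        · rintro ⟨hgC, hgf, hint⟩
          exact ⟨hCsub hgC, hgf, hint⟩
        · rintro ⟨hgS, hgf, hint⟩
          exact ⟨hclosed f hf g hgS hint, hgf, hint⟩
      have hreg : ∀ w ∈ C, (NS C w).card = D := by
        intro w hw
        rw [hNSC w hw, (hCtight w hw).2.2.2]
        omega
      have hNtights : ∀ f ∈ NS S e₀, Tight t S f := by
        intro f hf
        obtain ⟨hfS, hfne, hfint⟩ := mem_NS.mp hf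
        exact hTR f (reach_head ⟨hfS, he₀S, ⟨hfne, hfint⟩⟩ Relation.ReflTransGen.refl) hfS
      obtain ⟨u, huNS, v, hvNS, huv⟩ := exists_disjoint_pair ht2 hT0 he₀S hNtights
      have hNSe₀ : NS C e₀ = NS S e₀ := hNSC e₀ he₀C
      have huC : u ∈ NS C e₀ := by rw [hNSe₀]; exact huNS
      have hvC2 : v ∈ NS C e₀ := by rw [hNSe₀]; exact hvNS
      have huvne : u ≠ v := by
        rintro rfl
        have huS : u ∈ S := (mem_NS.mp huNS).1
        have h2 := hE2 u (hSE huS)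
        rw [Finset.inter_self] at huv
        rw [huv] at h2
        simp at h2
      have hCcard_pos : 0 < C.card := Finset.card_pos.mpr ⟨e₀, he₀C⟩
      have hrest : ∃ cR, Proper D (S \ C) cR := by
        apply IH (S \ C) ((Finset.sdiff_subset).trans hSE)
        have h1 : (S \ C).card = S.card - C.card := Finset.card_sdiff_of_subset hCsub
        omega
      obtain ⟨cR, hcR⟩ := hrest
      have hdisj : ∀ f ∈ C, ∀ g ∈ S \ C, g ∉ C → f ∩ g = ∅ := by
        intro f hf g hg hgC
        by_contra hne
        have hgS : g ∈ S := (Finset.mem_sdiff.mp hg).1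
        have : g ∈ C := hclosed f hf g hgS (by
          rw [Finset.inter_comm]
          exact Finset.nonempty_iff_ne_empty.mpr hne)
        exact hgC this
      have hcombine : (∃ cC, Proper D C cC) → ∃ c, Proper D S c := by
        rintro ⟨cC, hcC⟩
        obtain ⟨c, hc⟩ := proper_union hdisj hcC hcR
        rw [Finset.union_sdiff_of_subset hCsub] at hc
        exact ⟨c, hc⟩
      apply hcombine
      by_cases hconn : ∀ w ∈ (C.erase u).erase v, Reach ((C.erase u).erase v) w e₀
      · exact greedy_case1 (by omega) hreg huC hvC2 huv huvne he₀C hconn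
      · push_neg at hconn
        apply case2_surgery (hCsub.trans hSE) hD4 hreg huC hvC2 huv huvne he₀C hconn
        intro S' hS'E hlt
        apply IH S' hS'E
        have h1 : C.card ≤ S.card := Finset.card_le_card hCsub
        omega

end Stmt2

/-- if `(Δ(H) - 1)² ≤ Δ₂(H) + 1` then `q(H) ≤ Δ₂(H) + 1`. -/
theorem stmt_2 {V : Type*} [Fintype V] [DecidableEq V] (E : Finset (Finset V))
    (hE : E.Nonempty) (hloopless : ∀ e ∈ E, 2 ≤ e.card)
    (hdeg : (maxDeg E - 1) ^ 2 ≤ maxDeg2 E + 1) :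
    chromIndex E ≤ maxDeg2 E + 1 := by
  have hvd : ∀ x : V, vdeg E x ≤ (maxDeg E - 1) + 1 := by
    intro x
    have : vdeg E x ≤ maxDeg E := Finset.le_sup (Finset.mem_univ x)
    omega
  have hd2 : ∀ x : V, deg2 E x < maxDeg2 E + 1 := by
    intro x
    have : deg2 E x ≤ maxDeg2 E := Finset.le_sup (Finset.mem_univ x)
    omega
  have htD : (maxDeg E - 1) * (maxDeg E - 1) ≤ maxDeg2 E + 1 := by
    have := hdeg; rwa [pow_two] at this
  obtain ⟨c, hc⟩ := Stmt2.main_lemma hloopless hvd hd2 htD E.card E (le_refl _) (le_refl _)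
  apply Nat.sInf_le
  exact ⟨c, hc.1, hc.2⟩
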